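/- Let α > 0 and define f(u) := u^{2/α}·e^{−u}/Γ(1 + 2/α) for u ≥ 0. Then for every r ≥ 0, f(r) = (2/α)·e^{−r} · ∫_0^r e^{y}·y^{(2−α)/α} · ( ∫_y^∞ u^{−2/α}·f(u) du ) dy; that is, the Gamma density f solves the integral fixed-point equation for the interval-splitting model with uniform splitting distribution. -/

import Mathlib

/-- The Gamma density with shape `1 + 2/α` and rate `1`:
`f(u) = u^{2/α} e^{−u} / Γ(1 + 2/α)`. -/
noncomputable def gammaDensity (α u : ℝ) : ℝ :=
  u ^ (2 / α) * Real.exp (-u) / Real.Gamma (1 + 2 / α)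

/-- For `α > 0` and every `r ≥ 0`, the Gamma density `f = gammaDensity α` satisfies
`f(r) = (2/α) e^{−r} ∫_0^r e^y y^{(2−α)/α} (∫_y^∞ u^{−2/α} f(u) du) dy`;
that is, `f` solves the fixed-point equation for uniform splitting. -/
theorem gammaDensity_fixed_point (α : ℝ) (hα : 0 < α) :
    ∀ r : ℝ, 0 ≤ r →
      gammaDensity α r
        = (2 / α) * Real.exp (-r) *
            ∫ y in (0:ℝ)..r, Real.exp y * y ^ ((2 - α) / α) *
              (∫ u in Set.Ioi y, u ^ (-(2 / α)) * gammaDensity α u) := by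
  intro r hr
  have h2α : 0 < 2 / α := by positivity
  have hΓ : 0 < Real.Gamma (1 + 2 / α) := Real.Gamma_pos_of_pos (by linarith)
  have hinner : ∀ y : ℝ, 0 ≤ y →
      (∫ u in Set.Ioi y, u ^ (-(2 / α)) * gammaDensity α u)
        = Real.exp (-y) / Real.Gamma (1 + 2 / α) := by
    intro y hy
    have hcong : ∀ u ∈ Set.Ioi y, u ^ (-(2 / α)) * gammaDensity α u
        = Real.exp (-u) / Real.Gamma (1 + 2 / α) := by
      intro u hu
      have hu0 : 0 < u := lt_of_le_of_lt hy hu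
      unfold gammaDensity
      rw [mul_div_assoc', ← mul_assoc, ← Real.rpow_add hu0]
      simp
    rw [MeasureTheory.setIntegral_congr_fun measurableSet_Ioi hcong,
      MeasureTheory.integral_div, integral_exp_neg_Ioi]
  have hicong : ∀ y ∈ Set.uIcc (0:ℝ) r,
      Real.exp y * y ^ ((2 - α) / α) *
        (∫ u in Set.Ioi y, u ^ (-(2 / α)) * gammaDensity α u)
      = y ^ ((2 - α) / α) / Real.Gamma (1 + 2 / α) := by
    intro y hy
    rw [Set.uIcc_of_le hr] at hy
    rw [hinner y hy.1]
    rw [div_eq_mul_inv, div_eq_mul_inv]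
    rw [Real.exp_neg]
    field_simp
  rw [intervalIntegral.integral_congr hicong]
  rw [intervalIntegral.integral_div]
  rw [integral_rpow (Or.inl (by rw [lt_div_iff₀ hα]; linarith))]
  have he : (2 - α) / α + 1 = 2 / α := by field_simp; ring
  rw [he, Real.zero_rpow (ne_of_gt h2α)]
  unfold gammaDensity
  rw [sub_zero]
  field_simp
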